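/- Let n ≥ 3 and let N = (n−1)(n−2)/2. Suppose (p_i, q_i, r_i), for i ranging over an index set of cardinality N, is a family of triples of pairwise distinct vertices in Fin n such that for each index i there exist vertices a, b with c(p_i,q_i,r_i) a b ≠ 0 while c(p_j,q_j,r_j) a b = 0 for every j ≠ i. Then the family of three-cycle graphs {c(p_i,q_i,r_i)} is a basis of the orthogonal complement of ST inside the space of asymmetric weighted graphs on n vertices. -/

import Mathlib

/-- An asymmetric weighted graph on `n` vertices. -/
def IsAsymGraph {n : ℕ} (d : Fin n → Fin n → ℝ) : Prop :=
  ∀ i j, d i j = -(d j i)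

/-- Strong transitivity. -/
def StronglyTransitive {n : ℕ} (d : Fin n → Fin n → ℝ) : Prop :=
  ∀ i j k, d i j + d j k = d i k

/-- The `d`-length of a walk `v` of length `m`. -/
def walkLen {n m : ℕ} (d : Fin n → Fin n → ℝ) (v : Fin (m + 1) → Fin n) : ℝ :=
  ∑ t : Fin m, d (v t.castSucc) (v t.succ)

/-- The inner product of two weighted graphs. -/
def ginner {n : ℕ} (d e : Fin n → Fin n → ℝ) : ℝ :=
  ∑ i : Fin n, ∑ j : Fin n, d i j * e i j

/-- `d` is orthogonal to every strongly transitive asymmetric graph. -/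
def OrthST {n : ℕ} (d : Fin n → Fin n → ℝ) : Prop :=
  ∀ e : Fin n → Fin n → ℝ, IsAsymGraph e → StronglyTransitive e → ginner d e = 0

/-- The three-cycle graph on the pairwise distinct vertices `p q r`. -/
def threeCycle {n : ℕ} (p q r : Fin n) : Fin n → Fin n → ℝ :=
  fun a b =>
    if (a, b) = (p, q) ∨ (a, b) = (q, r) ∨ (a, b) = (r, p) then 1
    else if (a, b) = (q, p) ∨ (a, b) = (r, q) ∨ (a, b) = (p, r) then -1
    else 0

/-- The `d`-length of a Hamiltonian circuit given by a bijection `v`. -/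
def hamLen {n : ℕ} (d : Fin n → Fin n → ℝ) (v : Fin n → Fin n) : ℝ :=
  ∑ t : Fin n, d (v t) (v (finRotate n t))

lemma pot_asym {n : ℕ} (f : Fin n → ℝ) : IsAsymGraph (fun i j => f i - f j) := by
  intro i j; ring

lemma pot_st {n : ℕ} (f : Fin n → ℝ) : StronglyTransitive (fun i j => f i - f j) := by
  intro i j k; ring

lemma ginner_pot {n : ℕ} {d : Fin n → Fin n → ℝ} (hd : IsAsymGraph d) (f : Fin n → ℝ) :
    ginner d (fun i j => f i - f j) = 2 * ∑ i, f i * ∑ j, d i j := by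
  have h1 : ginner d (fun i j => f i - f j)
      = (∑ i, ∑ j, d i j * f i) - ∑ i, ∑ j, d i j * f j := by
    simp [ginner, mul_sub, Finset.sum_sub_distrib]
  have h2 : (∑ i : Fin n, ∑ j : Fin n, d i j * f j) = - ∑ i, f i * ∑ j, d i j := by
    rw [Finset.sum_comm]
    rw [← Finset.sum_neg_distrib]
    refine Finset.sum_congr rfl fun j _ => ?_
    rw [Finset.mul_sum, ← Finset.sum_neg_distrib]
    refine Finset.sum_congr rfl fun i _ => ?_
    rw [hd i j]; ring
  have h3 : (∑ i : Fin n, ∑ j : Fin n, d i j * f i) = ∑ i, f i * ∑ j, d i j := by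
    refine Finset.sum_congr rfl fun i _ => ?_
    rw [Finset.mul_sum]
    refine Finset.sum_congr rfl fun j _ => ?_; ring
  rw [h1, h2, h3]; ring

lemma rowsum_zero {n : ℕ} {d : Fin n → Fin n → ℝ} (hd : IsAsymGraph d) (ho : OrthST d)
    (k : Fin n) : ∑ j, d k j = 0 := by
  have := ho _ (pot_asym (fun x => if x = k then (1:ℝ) else 0))
    (pot_st (fun x => if x = k then (1:ℝ) else 0))
  rw [ginner_pot hd] at this
  simp [Finset.sum_ite_eq', ite_mul] at this
  exact this

lemma tc_asym {n : ℕ} {p q r : Fin n} (hpq : p ≠ q) (hqr : q ≠ r) (hpr : p ≠ r) :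
    IsAsymGraph (threeCycle p q r) := by
  intro a b
  simp only [threeCycle, Prod.mk.injEq]
  split_ifs <;> (try norm_num) <;>
    (exfalso; casesm* _ ∨ _, _ ∧ _ <;> subst_vars <;> simp_all)

lemma tc_row_p {n : ℕ} {p q r : Fin n} (hpq : p ≠ q) (hqr : q ≠ r) (hpr : p ≠ r) (j : Fin n) :
    threeCycle p q r p j = (if j = q then (1:ℝ) else 0) + (if j = r then (-1:ℝ) else 0) := by
  simp only [threeCycle, Prod.mk.injEq]
  split_ifs <;> simp_all

lemma tc_row_q {n : ℕ} {p q r : Fin n} (hpq : p ≠ q) (hqr : q ≠ r) (hpr : p ≠ r) (j : Fin n) :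
    threeCycle p q r q j = (if j = r then (1:ℝ) else 0) + (if j = p then (-1:ℝ) else 0) := by
  simp only [threeCycle, Prod.mk.injEq]
  split_ifs <;> simp_all

lemma tc_row_r {n : ℕ} {p q r : Fin n} (hpq : p ≠ q) (hqr : q ≠ r) (hpr : p ≠ r) (j : Fin n) :
    threeCycle p q r r j = (if j = p then (1:ℝ) else 0) + (if j = q then (-1:ℝ) else 0) := by
  simp only [threeCycle, Prod.mk.injEq]
  split_ifs <;> simp_all

lemma tc_row_other {n : ℕ} {p q r : Fin n} {i : Fin n} (hip : i ≠ p) (hiq : i ≠ q)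
    (hir : i ≠ r) (j : Fin n) : threeCycle p q r i j = 0 := by
  simp only [threeCycle, Prod.mk.injEq]
  split_ifs <;> simp_all

lemma tc_rowsum {n : ℕ} {p q r : Fin n} (hpq : p ≠ q) (hqr : q ≠ r) (hpr : p ≠ r) (i : Fin n) :
    ∑ j, threeCycle p q r i j = 0 := by
  by_cases hip : i = p
  · subst hip
    simp [tc_row_p hpq hqr hpr, Finset.sum_add_distrib, Finset.sum_ite_eq']
  by_cases hiq : i = q
  · subst hiq
    simp [tc_row_q hpq hqr hpr, Finset.sum_add_distrib, Finset.sum_ite_eq']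
  by_cases hir : i = r
  · subst hir
    simp [tc_row_r hpq hqr hpr, Finset.sum_add_distrib, Finset.sum_ite_eq']
  simp [tc_row_other hip hiq hir]

lemma tc_orth {n : ℕ} (hn : 3 ≤ n) {p q r : Fin n} (hpq : p ≠ q) (hqr : q ≠ r) (hpr : p ≠ r) :
    OrthST (threeCycle p q r) := by
  intro e he hst
  have x0 : Fin n := ⟨0, by omega⟩
  have hee : e = fun i j => e i x0 - e j x0 := by
    funext i j
    have h1 := hst i x0 j
    have h2 := he x0 j
    rw [h2] at h1
    linarith
  rw [hee, ginner_pot (tc_asym hpq hqr hpr)]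
  simp [tc_rowsum hpq hqr hpr]

lemma asym_orth_eq_zero {n : ℕ} [NeZero n] {d : Fin n → Fin n → ℝ} (hd : IsAsymGraph d) (ho : OrthST d)
    (hz : ∀ i j : Fin n, 0 < i → i < j → d i j = 0) : d = 0 := by
  have hdiag : ∀ i, d i i = 0 := fun i => by have := hd i i; linarith
  have hz2 : ∀ i j : Fin n, i ≠ 0 → j ≠ 0 → d i j = 0 := by
    intro i j hi hj
    rcases lt_trichotomy i j with h | h | h
    · exact hz i j ((Fin.pos_iff_ne_zero' i).mpr hi) h
    · exact h ▸ hdiag i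
    · rw [hd i j, hz j i ((Fin.pos_iff_ne_zero' j).mpr hj) h, neg_zero]
  have hrow : ∀ k : Fin n, k ≠ 0 → d k 0 = 0 := by
    intro k hk
    have h0 := rowsum_zero hd ho k
    have : ∑ j, d k j = d k 0 := by
      refine Finset.sum_eq_single_of_mem 0 (Finset.mem_univ _) fun j _ hj => hz2 k j hk hj
    rw [this] at h0; exact h0
  funext i j
  show d i j = 0
  by_cases hi : i = 0
  · subst hi
    by_cases hj : j = 0
    · subst hj; exact hdiag 0
    · rw [hd 0 j, hrow j hj, neg_zero]
  · by_cases hj : j = 0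
    · subst hj; exact hrow i hi
    · exact hz2 i j hi hj

lemma card_pairs (n : ℕ) [NeZero n] :
    Fintype.card {x : Fin n × Fin n // 0 < x.1 ∧ x.1 < x.2} ≤ (n - 1) * (n - 2) / 2 := by
  classical
  rw [Fintype.card_subtype]
  have h : (Finset.univ.filter fun x : Fin n × Fin n => 0 < x.1 ∧ x.1 < x.2).card
      ≤ (Finset.powersetCard 2 (Finset.univ.erase (0 : Fin n))).card := by
    apply Finset.card_le_card_of_injOn (fun x : Fin n × Fin n => ({x.1, x.2} : Finset (Fin n)))
    · intro x hx
      rw [Finset.mem_coe, Finset.mem_filter] at hx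
      obtain ⟨-, h1, h2⟩ := hx
      rw [Finset.mem_coe, Finset.mem_powersetCard]
      constructor
      · intro y hy
        rw [Finset.mem_insert, Finset.mem_singleton] at hy
        rcases hy with rfl | rfl
        · exact Finset.mem_erase.mpr ⟨ne_of_gt h1, Finset.mem_univ _⟩
        · exact Finset.mem_erase.mpr ⟨ne_of_gt (h1.trans h2), Finset.mem_univ _⟩
      · exact Finset.card_pair (ne_of_lt h2)
    · intro x hx y hy heq
      rw [Finset.coe_filter, Set.mem_setOf_eq] at hx hy
      obtain ⟨-, -, hx2⟩ := hx
      obtain ⟨-, -, hy2⟩ := hy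
      simp only at heq
      have e1 : x.1 = y.1 ∨ x.1 = y.2 := by
        have h := heq ▸ Finset.mem_insert_self x.1 {x.2}
        simpa using h
      have e2 : x.2 = y.1 ∨ x.2 = y.2 := by
        have h : x.2 ∈ ({x.1, x.2} : Finset (Fin n)) := by simp
        rw [heq] at h; simpa using h
      have : x.1 = y.1 ∧ x.2 = y.2 := by
        rcases e1 with e1 | e1 <;> rcases e2 with e2 | e2 <;> omega
      exact Prod.ext this.1 this.2
  refine h.trans ?_
  rw [Finset.card_powersetCard, Finset.card_erase_of_mem (Finset.mem_univ _),
    Finset.card_univ, Fintype.card_fin, Nat.choose_two_right]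
  have : n - 1 - 1 = n - 2 := by omega
  rw [this]

def ortS (n : ℕ) : Submodule ℝ (Fin n → Fin n → ℝ) where
  carrier := {d | IsAsymGraph d ∧ OrthST d}
  add_mem' := by
    rintro a b ⟨ha1, ha2⟩ ⟨hb1, hb2⟩
    constructor
    · intro i j; simp only [Pi.add_apply]; rw [ha1 i j, hb1 i j]; ring
    · intro e he hst
      have h : ginner (a + b) e = ginner a e + ginner b e := by
        simp [ginner, Pi.add_apply, add_mul, Finset.sum_add_distrib]
      rw [h, ha2 e he hst, hb2 e he hst, add_zero]
  zero_mem' := by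
    constructor
    · intro i j; simp
    · intro e _ _; simp [ginner]
  smul_mem' := by
    rintro c a ⟨ha1, ha2⟩
    constructor
    · intro i j; simp only [Pi.smul_apply, smul_eq_mul]; rw [ha1 i j]; ring
    · intro e he hst
      have h : ginner (c • a) e = c * ginner a e := by
        simp [ginner, Pi.smul_apply, smul_eq_mul, Finset.mul_sum, mul_assoc]
      rw [h, ha2 e he hst, mul_zero]

theorem stmt4 (n : ℕ) (hn : 3 ≤ n) (ι : Type) [Fintype ι]
    (hcard : Fintype.card ι = (n - 1) * (n - 2) / 2)
    (p q r : ι → Fin n)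
    (hdist : ∀ i, p i ≠ q i ∧ q i ≠ r i ∧ p i ≠ r i)
    (hsep : ∀ i : ι, ∃ a b : Fin n, threeCycle (p i) (q i) (r i) a b ≠ 0 ∧
      ∀ j : ι, j ≠ i → threeCycle (p j) (q j) (r j) a b = 0) :
    ∃ S : Submodule ℝ (Fin n → Fin n → ℝ),
      (S : Set (Fin n → Fin n → ℝ)) = {d | IsAsymGraph d ∧ OrthST d} ∧
      LinearIndependent ℝ (fun i : ι => threeCycle (p i) (q i) (r i)) ∧
      Submodule.span ℝ (Set.range fun i : ι => threeCycle (p i) (q i) (r i)) = S := by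
  haveI : NeZero n := ⟨by omega⟩
  classical
  have hli : LinearIndependent ℝ (fun i : ι => threeCycle (p i) (q i) (r i)) := by
    rw [Fintype.linearIndependent_iff]
    intro g hg i
    obtain ⟨a, b, hab, hz⟩ := hsep i
    have h1 := congrFun (congrFun hg a) b
    have h2 : ∑ j : ι, g j * threeCycle (p j) (q j) (r j) a b = 0 := by
      simpa [Finset.sum_apply] using h1
    rw [Finset.sum_eq_single i (fun j _ hj => by rw [hz j hj, mul_zero])
      (fun h => absurd (Finset.mem_univ i) h)] at h2
    rcases mul_eq_zero.mp h2 with h | h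
    · exact h
    · exact absurd h hab
  refine ⟨ortS n, rfl, hli, ?_⟩
  have hle : Submodule.span ℝ (Set.range fun i : ι => threeCycle (p i) (q i) (r i)) ≤ ortS n := by
    rw [Submodule.span_le]
    rintro _ ⟨i, rfl⟩
    obtain ⟨h1, h2, h3⟩ := hdist i
    exact ⟨tc_asym h1 h2 h3, tc_orth hn h1 h2 h3⟩
  refine Submodule.eq_of_le_of_finrank_le hle ?_
  let φ : (Fin n → Fin n → ℝ) →ₗ[ℝ] ({x : Fin n × Fin n // 0 < x.1 ∧ x.1 < x.2} → ℝ) :=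
    { toFun := fun d x => d x.1.1 x.1.2
      map_add' := fun _ _ => rfl
      map_smul' := fun _ _ => rfl }
  have hinj : Function.Injective (φ.domRestrict (ortS n)) := by
    refine (injective_iff_map_eq_zero _).mpr ?_
    rintro ⟨d, hd1, hd2⟩ h
    refine Subtype.ext ?_
    apply asym_orth_eq_zero hd1 hd2
    intro i j hi hij
    exact congrFun h ⟨(i, j), hi, hij⟩
  have hS : Module.finrank ℝ (ortS n) ≤ (n - 1) * (n - 2) / 2 := by
    have h := LinearMap.finrank_le_finrank_of_injective hinj
    rw [Module.finrank_pi] at h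
    exact h.trans (card_pairs n)
  rw [finrank_span_eq_card hli, hcard]
  exact hS
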